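/- With Γ = ⟨α,β,γ⟩ ⊂ Diff(T⁷) as above, each of the four composite elements αβ, βγ, γα and αβγ acts freely on T⁷ (i.e., has no fixed points), while the fixed point set of each of α, β, γ is a disjoint union of 16 copies of T³. -/
import Mathlib


/-- The 7-torus `T⁷ = ℝ⁷/ℤ⁷`. -/
abbrev T7 : Type := Fin 7 → AddCircle (1 : ℝ)

/-- `α(x) = (x₁, x₂, x₃, −x₄, −x₅, −x₆, −x₇)` (coordinates mod 1, 0-indexed). -/
noncomputable def alphaT (x : T7) : T7 := ![x 0, x 1, x 2, -x 3, -x 4, -x 5, -x 6]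

/-- `β(x) = (x₁, −x₂, −x₃, x₄, x₅, ½−x₆, −x₇)`. -/
noncomputable def betaT (x : T7) : T7 :=
  ![x 0, -x 1, -x 2, x 3, x 4, ((1 / 2 : ℝ) : AddCircle (1 : ℝ)) - x 5, -x 6]

/-- `γ(x) = (−x₁, x₂, −x₃, x₄, ½−x₅, x₆, ½−x₇)`. -/
noncomputable def gammaT (x : T7) : T7 :=
  ![-x 0, x 1, -x 2, x 3, ((1 / 2 : ℝ) : AddCircle (1 : ℝ)) - x 4, x 5,
    ((1 / 2 : ℝ) : AddCircle (1 : ℝ)) - x 6]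

instance : Fact ((0:ℝ) < 1) := ⟨one_pos⟩

lemma addc_eq_iff (a b : ℝ) : ((a : AddCircle (1:ℝ)) = b) ↔ ∃ n : ℤ, a = b + n := by
  constructor
  · intro h
    have h2 : ((a - b : ℝ) : AddCircle (1:ℝ)) = 0 := by
      rw [sub_eq_add_neg, AddCircle.coe_add, h]
      simp [← AddCircle.coe_add]
    obtain ⟨n, hn⟩ := (AddCircle.coe_eq_zero_iff (1:ℝ)).mp h2
    refine ⟨n, ?_⟩
    have : (n : ℝ) * 1 = a - b := by simpa [zsmul_eq_mul] using hn
    linarith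
  · rintro ⟨n, rfl⟩
    have : ((n : ℝ) : AddCircle (1:ℝ)) = 0 :=
      (AddCircle.coe_eq_zero_iff (1:ℝ)).mpr ⟨n, by simp⟩
    rw [AddCircle.coe_add, this, add_zero]

lemma addc_half_ne (a b : ℝ) (h : a - b = 1/2) : ((a : AddCircle (1:ℝ)) ≠ b) := by
  intro hc
  obtain ⟨n, hn⟩ := (addc_eq_iff a b).mp hc
  have h1 : ((2*n : ℤ) : ℝ) = 1 := by push_cast; linarith
  have h2 : (2*n : ℤ) = 1 := by exact_mod_cast h1
  omega

lemma half_ne_zero' : (((1/2 : ℝ)) : AddCircle (1:ℝ)) ≠ 0 := by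
  have h := addc_half_ne (1/2) 0 (by norm_num)
  simpa using h

/-- The two solutions of `y + y = c` on the circle. -/
noncomputable def ptc (c : ℝ) (b : Fin 2) : AddCircle (1:ℝ) :=
  ((c/2 + (b:ℕ)/2 : ℝ) : AddCircle (1:ℝ))

lemma ptc_add_ptc (c : ℝ) (b : Fin 2) : ptc c b + ptc c b = ((c : ℝ) : AddCircle (1:ℝ)) := by
  unfold ptc
  rw [← AddCircle.coe_add]
  fin_cases b
  · norm_num
  · rw [addc_eq_iff]; exact ⟨1, by push_cast; ring⟩

lemma ptc_ne (c : ℝ) : ptc c 1 ≠ ptc c 0 := by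
  unfold ptc
  apply addc_half_ne
  norm_num

lemma torsion_cases (c : ℝ) (y : AddCircle (1:ℝ)) (hy : y + y = ((c : ℝ) : AddCircle (1:ℝ))) :
    y = ptc c 0 ∨ y = ptc c 1 := by
  obtain ⟨r, rfl⟩ := QuotientAddGroup.mk_surjective y
  rw [← AddCircle.coe_add, addc_eq_iff] at hy
  obtain ⟨n, hn⟩ := hy
  rcases Int.even_or_odd n with ⟨k, hk⟩ | ⟨k, hk⟩
  · left; unfold ptc; rw [addc_eq_iff]
    exact ⟨k, by push_cast [hk] at hn ⊢; norm_num; linarith⟩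
  · right; unfold ptc; rw [addc_eq_iff]
    exact ⟨k, by push_cast [hk] at hn ⊢; norm_num; linarith⟩

open scoped Classical in
/-- Classify a torsion point. -/
noncomputable def dcd (c : ℝ) (y : AddCircle (1:ℝ)) : Fin 2 := if y = ptc c 0 then 0 else 1

lemma dcd_ptc (c : ℝ) (b : Fin 2) : dcd c (ptc c b) = b := by
  unfold dcd
  fin_cases b <;> simp [ptc_ne c]

lemma ptc_dcd (c : ℝ) (y : AddCircle (1:ℝ)) (hy : y + y = ((c : ℝ) : AddCircle (1:ℝ))) :
    ptc c (dcd c y) = y := by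
  unfold dcd
  by_cases h : y = ptc c 0
  · rw [if_pos h, h]
  · rw [if_neg h]
    rcases torsion_cases c y hy with h0 | h1
    · exact absurd h0 h
    · exact h1.symm

lemma fixed_homeo (f : T7 → T7) (hf : Continuous f)
    (idx : Fin 7 → Fin 3 ⊕ Fin 4) (fr : Fin 3 → Fin 7) (tr : Fin 4 → Fin 7) (c : Fin 4 → ℝ)
    (hfr : ∀ j, idx (fr j) = Sum.inl j) (htr : ∀ j, idx (tr j) = Sum.inr j)
    (hsec : ∀ i, Sum.elim (fun j => fr j = i) (fun j => tr j = i) (idx i))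
    (hfix : ∀ x : T7, f x = x ↔
      ∀ j : Fin 4, x (tr j) + x (tr j) = ((c j : ℝ) : AddCircle (1:ℝ))) :
    Nonempty ({x : T7 // f x = x} ≃ₜ (Fin 16 × (Fin 3 → AddCircle (1 : ℝ)))) := by
  have hcl : IsClosed {x : T7 | f x = x} := isClosed_eq hf continuous_id
  haveI : CompactSpace {x : T7 // f x = x} := isCompact_iff_compactSpace.mp hcl.isCompact
  let E : ((Fin 4 → Fin 2) × (Fin 3 → AddCircle (1:ℝ))) ≃ {x : T7 // f x = x} :=
    { toFun := fun p => ⟨fun i => Sum.elim (fun j => p.2 j) (fun j => ptc (c j) (p.1 j)) (idx i),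
        by
          rw [hfix]
          intro j
          simp only [htr j, Sum.elim_inr]
          exact ptc_add_ptc _ _⟩
      invFun := fun x => (fun j => dcd (c j) (x.1 (tr j)), fun j => x.1 (fr j))
      left_inv := by
        rintro ⟨b, t⟩
        refine Prod.ext ?_ ?_
        · funext j
          simp only [htr j, Sum.elim_inr, dcd_ptc]
        · funext j
          simp only [hfr j, Sum.elim_inl]
      right_inv := by
        rintro ⟨x, hx⟩
        apply Subtype.ext
        funext i
        dsimp only
        rcases hidx : idx i with j | j
        · have h2 := hsec i
          rw [hidx] at h2
          simp only [Sum.elim_inl] at h2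
          simp only [hidx, Sum.elim_inl, h2]
        · have h2 := hsec i
          rw [hidx] at h2
          simp only [Sum.elim_inr] at h2
          simp only [hidx, Sum.elim_inr]
          rw [ptc_dcd _ _ ((hfix x).mp hx j), h2] }
  have hcont : Continuous E.toFun := by
    apply Continuous.subtype_mk
    apply continuous_pi
    intro i
    rcases hidx : idx i with j | j
    · simp only [hidx, Sum.elim_inl]
      exact (continuous_apply j).comp continuous_snd
    · simp only [hidx, Sum.elim_inr]
      have hd : Continuous fun b : Fin 2 => ptc (c j) b := continuous_of_discreteTopology
      exact hd.comp ((continuous_apply j).comp continuous_fst)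
  let D : (Fin 4 → Fin 2) ≃ Fin 16 := Fintype.equivFinOfCardEq (by simp)
  let HD : (Fin 4 → Fin 2) ≃ₜ Fin 16 :=
    Continuous.homeoOfEquivCompactToT2 (f := D) continuous_of_discreteTopology
  exact ⟨(Continuous.homeoOfEquivCompactToT2 (f := E) hcont).symm.trans
    (HD.prodCongr (Homeomorph.refl _))⟩

lemma cont_alphaT : Continuous alphaT := by
  unfold alphaT
  apply continuous_pi; intro i; fin_cases i <;> simp <;> continuity

lemma cont_betaT : Continuous betaT := by
  unfold betaT
  apply continuous_pi; intro i; fin_cases i <;> simp <;> continuity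

lemma cont_gammaT : Continuous gammaT := by
  unfold gammaT
  apply continuous_pi; intro i; fin_cases i <;> simp <;> continuity

lemma neg_fix {y : AddCircle (1:ℝ)} (h : -y = y) : y + y = (((0:ℝ)) : AddCircle (1:ℝ)) := by
  rw [show (((0:ℝ)) : AddCircle (1:ℝ)) = 0 by norm_num]
  nth_rewrite 1 [← h]
  exact neg_add_cancel y

lemma neg_fix' {y : AddCircle (1:ℝ)} (h : y + y = (((0:ℝ)) : AddCircle (1:ℝ))) : -y = y := by
  rw [show (((0:ℝ)) : AddCircle (1:ℝ)) = 0 by norm_num] at h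
  exact neg_eq_of_add_eq_zero_left h

lemma half_fix {y : AddCircle (1:ℝ)}
    (h : ((1/2 : ℝ) : AddCircle (1:ℝ)) - y = y) : y + y = (((1/2:ℝ)) : AddCircle (1:ℝ)) :=
  eq_sub_iff_add_eq.mp h.symm

lemma half_fix' {y : AddCircle (1:ℝ)}
    (h : y + y = (((1/2:ℝ)) : AddCircle (1:ℝ))) : ((1/2 : ℝ) : AddCircle (1:ℝ)) - y = y :=
  (eq_sub_iff_add_eq.mpr h).symm

/-- The composite elements `αβ`, `βγ`, `γα` and `αβγ` of `Γ = ⟨α,β,γ⟩` act freely on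
`T⁷`, while the fixed point set of each of `α`, `β`, `γ` is a disjoint union of 16
copies of `T³` (i.e. is homeomorphic to `Fin 16 × T³`). -/
theorem fixed_points_of_Gamma :
    (∀ x : T7, alphaT (betaT x) ≠ x) ∧
    (∀ x : T7, betaT (gammaT x) ≠ x) ∧
    (∀ x : T7, gammaT (alphaT x) ≠ x) ∧
    (∀ x : T7, alphaT (betaT (gammaT x)) ≠ x) ∧
    Nonempty ({x : T7 // alphaT x = x} ≃ₜ (Fin 16 × (Fin 3 → AddCircle (1 : ℝ)))) ∧
    Nonempty ({x : T7 // betaT x = x} ≃ₜ (Fin 16 × (Fin 3 → AddCircle (1 : ℝ)))) ∧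
    Nonempty ({x : T7 // gammaT x = x} ≃ₜ (Fin 16 × (Fin 3 → AddCircle (1 : ℝ)))) := by
  refine ⟨?_, ?_, ?_, ?_, ?_, ?_, ?_⟩
  · -- αβ free: coordinate 5
    intro x h
    have h5 := congrFun h 5
    have e5 : alphaT (betaT x) 5 = -(((1/2 : ℝ) : AddCircle (1:ℝ)) - x 5) := rfl
    rw [e5, neg_sub] at h5
    exact half_ne_zero' (sub_eq_self.mp h5)
  · -- βγ free: coordinate 6
    intro x h
    have h6 := congrFun h 6
    have e6 : betaT (gammaT x) 6 = -(((1/2 : ℝ) : AddCircle (1:ℝ)) - x 6) := rfl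
    rw [e6, neg_sub] at h6
    exact half_ne_zero' (sub_eq_self.mp h6)
  · -- γα free: coordinate 4
    intro x h
    have h4 := congrFun h 4
    have e4 : gammaT (alphaT x) 4 = ((1/2 : ℝ) : AddCircle (1:ℝ)) - -x 4 := rfl
    rw [e4, sub_neg_eq_add] at h4
    nth_rewrite 2 [← zero_add (x 4)] at h4
    exact half_ne_zero' (add_right_cancel h4)
  · -- αβγ free: coordinate 4
    intro x h
    have h4 := congrFun h 4
    have e4 : alphaT (betaT (gammaT x)) 4 = -(((1/2 : ℝ) : AddCircle (1:ℝ)) - x 4) := rfl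
    rw [e4, neg_sub] at h4
    exact half_ne_zero' (sub_eq_self.mp h4)
  · -- fixed points of α
    refine fixed_homeo alphaT cont_alphaT
      ![Sum.inl 0, Sum.inl 1, Sum.inl 2, Sum.inr 0, Sum.inr 1, Sum.inr 2, Sum.inr 3]
      ![0, 1, 2] ![3, 4, 5, 6] ![0, 0, 0, 0] (by decide) (by decide)
      (by intro i; fin_cases i <;> exact rfl) ?_
    intro x
    constructor
    · intro h j
      have h3 : -x 3 = x 3 := congrFun h 3
      have h4 : -x 4 = x 4 := congrFun h 4
      have h5 : -x 5 = x 5 := congrFun h 5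
      have h6 : -x 6 = x 6 := congrFun h 6
      fin_cases j
      · exact neg_fix h3
      · exact neg_fix h4
      · exact neg_fix h5
      · exact neg_fix h6
    · intro h
      funext i
      fin_cases i
      · rfl
      · rfl
      · rfl
      · exact neg_fix' (h 0)
      · exact neg_fix' (h 1)
      · exact neg_fix' (h 2)
      · exact neg_fix' (h 3)
  · -- fixed points of β
    refine fixed_homeo betaT cont_betaT
      ![Sum.inl 0, Sum.inr 0, Sum.inr 1, Sum.inl 1, Sum.inl 2, Sum.inr 2, Sum.inr 3]
      ![0, 3, 4] ![1, 2, 5, 6] ![0, 0, 1/2, 0] (by decide) (by decide)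
      (by intro i; fin_cases i <;> exact rfl) ?_
    intro x
    constructor
    · intro h j
      have h1 : -x 1 = x 1 := congrFun h 1
      have h2 : -x 2 = x 2 := congrFun h 2
      have h5 : ((1/2 : ℝ) : AddCircle (1:ℝ)) - x 5 = x 5 := congrFun h 5
      have h6 : -x 6 = x 6 := congrFun h 6
      fin_cases j
      · exact neg_fix h1
      · exact neg_fix h2
      · exact half_fix h5
      · exact neg_fix h6
    · intro h
      funext i
      fin_cases i
      · rfl
      · exact neg_fix' (h 0)
      · exact neg_fix' (h 1)
      · rfl
      · rfl
      · exact half_fix' (h 2)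
      · exact neg_fix' (h 3)
  · -- fixed points of γ
    refine fixed_homeo gammaT cont_gammaT
      ![Sum.inr 0, Sum.inl 0, Sum.inr 1, Sum.inl 1, Sum.inr 2, Sum.inl 2, Sum.inr 3]
      ![1, 3, 5] ![0, 2, 4, 6] ![0, 0, 1/2, 1/2] (by decide) (by decide)
      (by intro i; fin_cases i <;> exact rfl) ?_
    intro x
    constructor
    · intro h j
      have h0 : -x 0 = x 0 := congrFun h 0
      have h2 : -x 2 = x 2 := congrFun h 2
      have h4 : ((1/2 : ℝ) : AddCircle (1:ℝ)) - x 4 = x 4 := congrFun h 4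
      have h6 : ((1/2 : ℝ) : AddCircle (1:ℝ)) - x 6 = x 6 := congrFun h 6
      fin_cases j
      · exact neg_fix h0
      · exact neg_fix h2
      · exact half_fix h4
      · exact half_fix h6
    · intro h
      funext i
      fin_cases i
      · exact neg_fix' (h 0)
      · rfl
      · exact neg_fix' (h 1)
      · rfl
      · exact half_fix' (h 2)
      · rfl
      · exact half_fix' (h 3)
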